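/- Let (Ω, 𝓕, P) be a probability space, let C ≥ 0, and let λ : ℝ × Ω → ℝ be jointly measurable with 0 ≤ λ(u, ω) ≤ C for all u and ω, and such that for P-almost every ω, the function u ↦ λ(u, ω) is continuous. Define S(t, ω) = exp(−∫₀ᵗ λ(u, ω) du). Fix t ∈ ℝ and real numbers λ₀ > 0 and ℓ > 0, and let G : ℝ → ℝ satisfy G(t) > 0 and G differentiable at t with G′(t) = −ℓ·G(t). Assume ∫_Ω λ(t, ω)·S(t, ω) dP(ω) > 0. Then the function t ↦ ∫_Ω S(t, ω) dP(ω) is differentiable at t with derivative equal to G′(t) if and only if λ₀/ℓ = G(t) / ∫_Ω (λ(t, ω)/λ₀)·S(t, ω) dP(ω). -/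

import Mathlib

open MeasureTheory intervalIntegral

/-- With bounded hazards `λ(u, ω)` a.e. continuous in `u` and
`S(t, ω) = exp(−∫₀ᵗ λ(u, ω) du)`, fix `t`, a baseline hazard `λ₀ > 0`, an overall hazard
`ℓ > 0`, and an overall survival `G` with `G(t) > 0` and `G′(t) = −ℓ·G(t)`. If
`∫ λ(t, ω) S(t, ω) dP(ω) > 0`, then `t ↦ ∫ S(t, ω) dP(ω)` has derivative `G′(t)` at `t`
iff `λ₀/ℓ = G(t)/∫ (λ(t, ω)/λ₀)·S(t, ω) dP(ω)` (i.e. `λ₀/λ = 1 − AR(t)`). -/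
theorem stmt_16 {Ω : Type*} [MeasurableSpace Ω] (P : Measure Ω) [IsProbabilityMeasure P]
    (C : ℝ) (hC : 0 ≤ C) (lam : ℝ → Ω → ℝ)
    (hmeas : Measurable (Function.uncurry lam))
    (hbd : ∀ u ω, 0 ≤ lam u ω ∧ lam u ω ≤ C)
    (hcont : ∀ᵐ ω ∂P, Continuous fun u => lam u ω)
    (S : ℝ → Ω → ℝ) (hS : ∀ t ω, S t ω = Real.exp (-∫ u in (0 : ℝ)..t, lam u ω))
    (t lam0 ell : ℝ) (hlam0 : 0 < lam0) (hell : 0 < ell)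
    (G : ℝ → ℝ) (hGt : 0 < G t) (hG : HasDerivAt G (-(ell * G t)) t)
    (hnum : 0 < ∫ ω, lam t ω * S t ω ∂P) :
    HasDerivAt (fun t' => ∫ ω, S t' ω ∂P) (-(ell * G t)) t ↔
      lam0 / ell = G t / ∫ ω, (lam t ω / lam0) * S t ω ∂P := by
  set B : ℝ := Real.exp (C * (|t| + 1)) with hBdef
  -- pointwise bound on S
  have hSle : ∀ x : ℝ, |x| ≤ |t| + 1 → ∀ ω, S x ω ≤ B := by
    intro x hx ω
    rw [hS]
    apply Real.exp_le_exp.2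
    have h1 : ‖∫ u in (0:ℝ)..x, lam u ω‖ ≤ C * |x - 0| := by
      apply intervalIntegral.norm_integral_le_of_norm_le_const
      intro u _
      rw [Real.norm_eq_abs, abs_le]
      exact ⟨by linarith [(hbd u ω).1], (hbd u ω).2⟩
    have h2 : -(∫ u in (0:ℝ)..x, lam u ω) ≤ C * |x| := by
      rw [sub_zero] at h1
      calc -(∫ u in (0:ℝ)..x, lam u ω) ≤ ‖∫ u in (0:ℝ)..x, lam u ω‖ := by
            rw [Real.norm_eq_abs]; linarith [neg_abs_le (∫ u in (0:ℝ)..x, lam u ω)]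
        _ ≤ C * |x| := h1
    calc -(∫ u in (0:ℝ)..x, lam u ω) ≤ C * |x| := h2
      _ ≤ C * (|t| + 1) := by nlinarith
  have hSpos : ∀ x ω, 0 < S x ω := fun x ω => by rw [hS]; exact Real.exp_pos _
  -- measurability of ω ↦ ∫ u in 0..x, lam u ω
  have meas_int : ∀ x : ℝ, Measurable fun ω => ∫ u in (0:ℝ)..x, lam u ω := by
    intro x
    have h1 : StronglyMeasurable (Function.uncurry fun (ω : Ω) (u : ℝ) => lam u ω) :=
      (hmeas.comp measurable_swap).stronglyMeasurable
    have h2 : ∀ a b : ℝ, Measurable fun ω => ∫ u in Set.Ioc a b, lam u ω := by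
      intro a b
      exact (h1.integral_prod_right (ν := volume.restrict (Set.Ioc a b))).measurable
    simp only [intervalIntegral]
    exact (h2 0 x).sub (h2 x 0)
  have meas_S : ∀ x : ℝ, Measurable fun ω => S x ω := by
    intro x
    simp only [hS]
    exact Real.measurable_exp.comp (meas_int x).neg
  have meas_lam : ∀ x : ℝ, Measurable fun ω => lam x ω :=
    fun x => hmeas.comp measurable_prodMk_left
  -- the key derivative
  have key : HasDerivAt (fun t' => ∫ ω, S t' ω ∂P)
      (-∫ ω, lam t ω * S t ω ∂P) t := by
    have main := hasDerivAt_integral_of_dominated_loc_of_deriv_le (μ := P)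
      (F := fun x ω => S x ω) (F' := fun x ω => -(lam x ω * S x ω))
      (x₀ := t) (s := Metric.ball t 1) (bound := fun _ => C * B) (Metric.ball_mem_nhds t one_pos)
      (Filter.Eventually.of_forall fun x => (meas_S x).aestronglyMeasurable)
      ?_ ?_ ?_ ?_ ?_
    · have := main.2
      rwa [MeasureTheory.integral_neg] at this
    · -- integrability of S t
      refine (integrable_const B).mono' (meas_S t).aestronglyMeasurable ?_
      refine Filter.Eventually.of_forall fun ω => ?_
      rw [Real.norm_eq_abs, abs_of_pos (hSpos t ω)]
      exact hSle t (by linarith) ω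
    · exact (((meas_lam t).mul (meas_S t)).neg).aestronglyMeasurable
    · -- bound
      refine Filter.Eventually.of_forall fun ω => ?_
      intro x hx
      have hxabs : |x| ≤ |t| + 1 := by
        have := abs_sub_abs_le_abs_sub x t
        have hd : |x - t| < 1 := by simpa [Real.dist_eq] using hx
        linarith
      rw [norm_neg, Real.norm_eq_abs,
        abs_of_nonneg (mul_nonneg (hbd x ω).1 (hSpos x ω).le)]
      exact mul_le_mul (hbd x ω).2 (hSle x hxabs ω) (hSpos x ω).le hC
    · exact integrable_const _
    · -- a.e. differentiability
      filter_upwards [hcont] with ω hcω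
      intro x _
      have hint : IntervalIntegrable (fun u => lam u ω) volume 0 x :=
        hcω.intervalIntegrable 0 x
      have hg : HasDerivAt (fun y => ∫ u in (0:ℝ)..y, lam u ω) (lam x ω) x :=
        intervalIntegral.integral_hasDerivAt_right hint
          (hcω.stronglyMeasurable.stronglyMeasurableAtFilter) hcω.continuousAt
      have hde := (hg.neg).exp
      have : HasDerivAt (fun y => S y ω)
          (Real.exp (-∫ u in (0:ℝ)..x, lam u ω) * -lam x ω) x := by
        simp only [hS]; exact hde
      convert this using 1
      · rfl
      · rfl
      rw [hS]; ring
  set I : ℝ := ∫ ω, lam t ω * S t ω ∂P with hIdef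
  have hdiv : (∫ ω, (lam t ω / lam0) * S t ω ∂P) = I / lam0 := by
    rw [hIdef, ← MeasureTheory.integral_div]
    congr 1
    funext ω
    ring
  rw [hdiv]
  have h2 : (lam0 / ell = G t / (I / lam0)) ↔ I = ell * G t := by
    rw [div_div_eq_mul_div, div_eq_div_iff hell.ne' hnum.ne']
    constructor
    · intro h
      have h' : lam0 * I = lam0 * (ell * G t) := by rw [h]; ring
      exact mul_left_cancel₀ hlam0.ne' h'
    · intro h; rw [h]; ring
  rw [h2]
  constructor
  · intro h
    have := h.unique key
    linarith
  · intro h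
    rw [show -(ell * G t) = -I by rw [h]]
    exact key
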